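/- Suppose 0 < R < 2. If a configuration x = (C, J_1, …, J_n) ∈ M_n(R) has its j-th and k-th arms both stretched out (i.e. |C − B_j| = 2 and |C − B_k| = 2) with j ≠ k, then the two arms are adjacent: j − k ≡ ±1 (mod n). -/

import Mathlib

/-- Euclidean norm of a vector in ℝ². -/
noncomputable def enorm2 (v : ℝ × ℝ) : ℝ := Real.sqrt (v.1 ^ 2 + v.2 ^ 2)

/-- The k-th fixed endpoint `B_k = (R cos(2kπ/n), R sin(2kπ/n))` (indices from 0). -/
noncomputable def Bpt (n : ℕ) (R : ℝ) (k : Fin n) : ℝ × ℝ :=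
  (R * Real.cos (2 * (k.val : ℝ) * Real.pi / (n : ℝ)),
   R * Real.sin (2 * (k.val : ℝ) * Real.pi / (n : ℝ)))

/-- The configuration space `M_n(R)` of spiders with `n` arms of radius `R`,
as a subset of `(ℝ²)^{n+1} ≅ ℝ^{2n+2}`: a pair `(C, J)` with
`|C − J_k| = 1` and `|J_k − B_k| = 1` for all `k`. -/
noncomputable def MSpace (n : ℕ) (R : ℝ) : Set ((ℝ × ℝ) × (Fin n → ℝ × ℝ)) :=
  {x | ∀ k : Fin n, enorm2 (x.1 - x.2 k) = 1 ∧ enorm2 (x.2 k - Bpt n R k) = 1}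

/-- `d_n`, the maximum distance between `n`-th roots of unity. -/
noncomputable def dmax (n : ℕ) : ℝ :=
  if Even n then 2
  else Real.sqrt (2 - 2 * Real.cos (2 * ((n / 2 : ℕ) : ℝ) * Real.pi / (n : ℝ)))

/-- The critical radius `R_n = 2 / d_n`. -/
noncomputable def Rcrit (n : ℕ) : ℝ := 2 / dmax n

lemma enorm2_nonneg (v : ℝ × ℝ) : 0 ≤ enorm2 v := Real.sqrt_nonneg _

lemma enorm2_sq (v : ℝ × ℝ) : (enorm2 v) ^ 2 = v.1 ^ 2 + v.2 ^ 2 :=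
  Real.sq_sqrt (by positivity)

lemma enorm2_triangle (u v : ℝ × ℝ) : enorm2 (u + v) ≤ enorm2 u + enorm2 v := by
  have hA := enorm2_sq u
  have hB := enorm2_sq v
  have hA0 := enorm2_nonneg u
  have hB0 := enorm2_nonneg v
  have h1 : enorm2 (u + v) = Real.sqrt ((u.1 + v.1) ^ 2 + (u.2 + v.2) ^ 2) := by
    simp [enorm2]
  rw [h1]
  have hcs : u.1 * v.1 + u.2 * v.2 ≤ enorm2 u * enorm2 v := by
    nlinarith [sq_nonneg (u.1 * v.2 - u.2 * v.1), mul_nonneg hA0 hB0,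
      sq_nonneg (enorm2 u * enorm2 v - (u.1 * v.1 + u.2 * v.2)),
      sq_nonneg (enorm2 u * enorm2 v + (u.1 * v.1 + u.2 * v.2))]
  have key : (u.1 + v.1) ^ 2 + (u.2 + v.2) ^ 2 ≤ (enorm2 u + enorm2 v) ^ 2 := by
    nlinarith
  calc Real.sqrt ((u.1 + v.1) ^ 2 + (u.2 + v.2) ^ 2)
      ≤ Real.sqrt ((enorm2 u + enorm2 v) ^ 2) := Real.sqrt_le_sqrt key
    _ = enorm2 u + enorm2 v := Real.sqrt_sq (by positivity)

set_option maxHeartbeats 1000000 in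
lemma trig_aux (n j k : ℕ) (hn : 2 ≤ n) (hkj : k < j) (hjn : j < n)
    (a b : ℝ) (hab : ¬ (a = 0 ∧ b = 0))
    (hmin : ∀ m : ℕ, m < n →
      a * Real.cos (2 * (j : ℝ) * Real.pi / (n : ℝ)) +
        b * Real.sin (2 * (j : ℝ) * Real.pi / (n : ℝ)) ≤
      a * Real.cos (2 * (m : ℝ) * Real.pi / (n : ℝ)) +
        b * Real.sin (2 * (m : ℝ) * Real.pi / (n : ℝ)))
    (heq : a * Real.cos (2 * (j : ℝ) * Real.pi / (n : ℝ)) +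
        b * Real.sin (2 * (j : ℝ) * Real.pi / (n : ℝ)) =
      a * Real.cos (2 * (k : ℝ) * Real.pi / (n : ℝ)) +
        b * Real.sin (2 * (k : ℝ) * Real.pi / (n : ℝ))) :
    j - k = 1 ∨ j - k = n - 1 := by
  by_contra hcon
  push_neg at hcon
  have hd2 : k + 2 ≤ j := by omega
  have hdn : j + 2 ≤ n + k := by omega
  have hn0 : (0 : ℝ) < (n : ℝ) := by exact_mod_cast (by omega : 0 < n)
  have hπ := Real.pi_pos
  set μ : ℝ := ((j : ℝ) + (k : ℝ)) * Real.pi / (n : ℝ) with hμ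
  have pyth := Real.sin_sq_add_cos_sq μ
  have rot : ∀ t : ℝ, a * Real.cos t + b * Real.sin t
      = (a * Real.cos μ + b * Real.sin μ) * Real.cos (t - μ)
        + (b * Real.cos μ - a * Real.sin μ) * Real.sin (t - μ) := by
    intro t
    rw [Real.cos_sub, Real.sin_sub]
    linear_combination (-(a * Real.cos t) - b * Real.sin t) * pyth
  set c₁ := a * Real.cos μ + b * Real.sin μ with hc₁
  set c₂ := b * Real.cos μ - a * Real.sin μ with hc₂
  have hang : ∀ m : ℕ, 2 * (m : ℝ) * Real.pi / (n : ℝ) - μ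
      = (2 * (m : ℝ) - (j : ℝ) - (k : ℝ)) * Real.pi / (n : ℝ) := by
    intro m; rw [hμ]; field_simp; ring
  set α : ℝ := ((j : ℝ) - (k : ℝ)) * Real.pi / (n : ℝ) with hα
  have hαj : 2 * (j : ℝ) * Real.pi / (n : ℝ) - μ = α := by
    rw [hang j, hα]; ring_nf
  have hαk : 2 * (k : ℝ) * Real.pi / (n : ℝ) - μ = -α := by
    rw [hang k, hα]; ring_nf
  have hD2 : (2 : ℝ) ≤ (j : ℝ) - (k : ℝ) := by
    have : ((k : ℝ) + 2) ≤ (j : ℝ) := by exact_mod_cast hd2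
    linarith
  have hDn : (j : ℝ) - (k : ℝ) ≤ (n : ℝ) - 2 := by
    have : (j : ℝ) + 2 ≤ (n : ℝ) + (k : ℝ) := by exact_mod_cast hdn
    linarith
  have hα0 : 0 < α := by
    rw [hα]
    apply div_pos (mul_pos (by linarith) hπ) hn0
  have hαπ : α < Real.pi := by
    rw [hα, div_lt_iff₀ hn0]
    nlinarith
  have hsinα : Real.sin α ≠ 0 := ne_of_gt (Real.sin_pos_of_pos_of_lt_pi hα0 hαπ)
  have hc2 : c₂ = 0 := by
    have h1 := heq
    rw [rot, rot, hαj, hαk, Real.cos_neg, Real.sin_neg] at h1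
    have h2 : c₂ * Real.sin α = 0 := by linarith
    rcases mul_eq_zero.mp h2 with h | h
    · exact h
    · exact absurd h hsinα
  have hsq : c₁ ^ 2 + c₂ ^ 2 = a ^ 2 + b ^ 2 := by
    rw [hc₁, hc₂]; linear_combination (a ^ 2 + b ^ 2) * pyth
  have hc1 : c₁ ≠ 0 := by
    intro h
    have hab2 : a ^ 2 + b ^ 2 = 0 := by rw [← hsq, h, hc2]; ring
    have ha2 : a ^ 2 = 0 := by nlinarith [sq_nonneg a, sq_nonneg b]
    have hb2 : b ^ 2 = 0 := by nlinarith [sq_nonneg a, sq_nonneg b]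
    exact hab ⟨pow_eq_zero_iff (by norm_num : (2:ℕ) ≠ 0) |>.mp ha2,
      pow_eq_zero_iff (by norm_num : (2:ℕ) ≠ 0) |>.mp hb2⟩
  have key : ∀ m : ℕ, m < n →
      c₁ * Real.cos α ≤
        c₁ * Real.cos ((2 * (m : ℝ) - (j : ℝ) - (k : ℝ)) * Real.pi / (n : ℝ)) := by
    intro m hm
    have h1 := hmin m hm
    rw [rot, rot, hαj, hang m, hc2] at h1
    simpa using h1
  rcases lt_or_gt_of_ne hc1 with hneg | hpos
  · -- c₁ < 0
    set p := (j + k) % 2 with hp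
    set m₀ := (j + k + p) / 2 with hm₀
    have hm₀n : m₀ < n := by omega
    have h2m : 2 * m₀ = j + k + p := by omega
    have hcast : 2 * (m₀ : ℝ) - (j : ℝ) - (k : ℝ) = (p : ℝ) := by
      have h1 : ((2 * m₀ : ℕ) : ℝ) = ((j + k + p : ℕ) : ℝ) := by rw [h2m]
      push_cast at h1
      linarith
    have hk1 := key m₀ hm₀n
    rw [hcast] at hk1
    have hp1 : (p : ℝ) ≤ 1 := by exact_mod_cast (by omega : p ≤ 1)
    have hcosle : Real.cos ((p : ℝ) * Real.pi / (n : ℝ)) ≤ Real.cos α := by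
      nlinarith
    have hlt : Real.cos α < Real.cos ((p : ℝ) * Real.pi / (n : ℝ)) := by
      apply Real.cos_lt_cos_of_nonneg_of_le_pi (by positivity) hαπ.le
      rw [hα]
      have hpd : (p : ℝ) < (j : ℝ) - (k : ℝ) := by linarith
      gcongr
    linarith
  · -- c₁ > 0
    set p := (j + k + n) % 2 with hp
    set M := (j + k + n + p) / 2 with hM
    have h2M : 2 * M = j + k + n + p := by omega
    set m₀ := M % n with hm₀
    have hm₀n : m₀ < n := Nat.mod_lt _ (by omega)
    have hp1 : (p : ℝ) ≤ 1 := by exact_mod_cast (by omega : p ≤ 1)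
    have hp0 : (0 : ℝ) ≤ (p : ℝ) := by positivity
    have hk1 := key m₀ hm₀n
    have hcos : Real.cos ((2 * (m₀ : ℝ) - (j : ℝ) - (k : ℝ)) * Real.pi / (n : ℝ))
        = - Real.cos ((p : ℝ) * Real.pi / (n : ℝ)) := by
      rcases Nat.lt_or_ge M n with hMn | hMn
      · have hm : m₀ = M := by rw [hm₀]; exact Nat.mod_eq_of_lt hMn
        have hcast : 2 * (m₀ : ℝ) - (j : ℝ) - (k : ℝ) = (n : ℝ) + (p : ℝ) := by
          have h1 : ((2 * M : ℕ) : ℝ) = ((j + k + n + p : ℕ) : ℝ) := by rw [h2M]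
          have h2 : (m₀ : ℝ) = (M : ℝ) := by rw [hm]
          push_cast at h1
          linarith
        rw [hcast, show ((n : ℝ) + (p : ℝ)) * Real.pi / (n : ℝ)
            = Real.pi + (p : ℝ) * Real.pi / (n : ℝ) by field_simp]
        rw [Real.cos_add]
        simp
      · have hMn2 : M < 2 * n := by omega
        have hm : m₀ + n = M := by
          rw [hm₀, Nat.mod_eq_sub_mod hMn, Nat.mod_eq_of_lt (by omega)]
          omega
        have hcast : 2 * (m₀ : ℝ) - (j : ℝ) - (k : ℝ) = (p : ℝ) - (n : ℝ) := by
          have h1 : ((2 * M : ℕ) : ℝ) = ((j + k + n + p : ℕ) : ℝ) := by rw [h2M]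
          have h2 : ((m₀ + n : ℕ) : ℝ) = (M : ℝ) := by rw [hm]
          push_cast at h1 h2
          linarith
        rw [hcast, show ((p : ℝ) - (n : ℝ)) * Real.pi / (n : ℝ)
            = -(Real.pi - (p : ℝ) * Real.pi / (n : ℝ)) by field_simp; ring]
        rw [Real.cos_neg, Real.cos_pi_sub]
    rw [hcos] at hk1
    have hcosle : Real.cos α ≤ - Real.cos ((p : ℝ) * Real.pi / (n : ℝ)) := by
      nlinarith
    have hlt : - Real.cos ((p : ℝ) * Real.pi / (n : ℝ)) < Real.cos α := by
      rw [← Real.cos_pi_sub]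
      apply Real.cos_lt_cos_of_nonneg_of_le_pi hα0.le
        (by linarith [div_nonneg (mul_nonneg hp0 hπ.le) hn0.le])
      have h3 : α + (p : ℝ) * Real.pi / (n : ℝ) < Real.pi := by
        rw [hα, ← add_div, div_lt_iff₀ hn0]
        nlinarith
      linarith
    linarith

set_option maxHeartbeats 1000000 in
/-- If `0 < R < 2` and a configuration in `M_n(R)` has its `j`-th and `k`-th arms
both stretched out (`|C − B_j| = |C − B_k| = 2`) with `j ≠ k`, then the two arms
are adjacent: `j − k ≡ ±1 (mod n)`. -/
theorem stmt0 (n : ℕ) (hn : 2 ≤ n) (R : ℝ) (hR0 : 0 < R) (hR2 : R < 2)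
    (x : (ℝ × ℝ) × (Fin n → ℝ × ℝ)) (hx : x ∈ MSpace n R)
    (j k : Fin n) (hjk : j ≠ k)
    (hj : enorm2 (x.1 - Bpt n R j) = 2) (hk : enorm2 (x.1 - Bpt n R k) = 2) :
    ((j : ℕ) : ZMod n) = ((k : ℕ) : ZMod n) + 1 ∨
      ((j : ℕ) : ZMod n) = ((k : ℕ) : ZMod n) - 1 := by
  set a := x.1.1 with ha
  set b := x.1.2 with hb
  have expand : ∀ m : Fin n, (x.1 - Bpt n R m).1 ^ 2 + (x.1 - Bpt n R m).2 ^ 2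
      = a ^ 2 + b ^ 2 + R ^ 2 -
        2 * R * (a * Real.cos (2 * (m.val : ℝ) * Real.pi / (n : ℝ)) +
          b * Real.sin (2 * (m.val : ℝ) * Real.pi / (n : ℝ))) := by
    intro m
    have pyth := Real.sin_sq_add_cos_sq (2 * (m.val : ℝ) * Real.pi / (n : ℝ))
    simp only [Bpt, Prod.fst_sub, Prod.snd_sub]
    linear_combination (R ^ 2) * pyth
  have hle : ∀ m : Fin n,
      (x.1 - Bpt n R m).1 ^ 2 + (x.1 - Bpt n R m).2 ^ 2 ≤ 4 := by
    intro m
    obtain ⟨h1, h2⟩ := hx m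
    have htri := enorm2_triangle (x.1 - x.2 m) (x.2 m - Bpt n R m)
    rw [sub_add_sub_cancel, h1, h2] at htri
    nlinarith [enorm2_sq (x.1 - Bpt n R m), enorm2_nonneg (x.1 - Bpt n R m)]
  have heqj : (x.1 - Bpt n R j).1 ^ 2 + (x.1 - Bpt n R j).2 ^ 2 = 4 := by
    rw [← enorm2_sq, hj]; norm_num
  have heqk : (x.1 - Bpt n R k).1 ^ 2 + (x.1 - Bpt n R k).2 ^ 2 = 4 := by
    rw [← enorm2_sq, hk]; norm_num
  have hEj := heqj; rw [expand j] at hEj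
  have hEk := heqk; rw [expand k] at hEk
  have heqf : a * Real.cos (2 * (j.val : ℝ) * Real.pi / (n : ℝ)) +
      b * Real.sin (2 * (j.val : ℝ) * Real.pi / (n : ℝ)) =
      a * Real.cos (2 * (k.val : ℝ) * Real.pi / (n : ℝ)) +
      b * Real.sin (2 * (k.val : ℝ) * Real.pi / (n : ℝ)) := by
    have h2R : (2 * R) ≠ 0 := by positivity
    apply mul_left_cancel₀ h2R
    linarith
  have hmin : ∀ m : ℕ, m < n →
      a * Real.cos (2 * (j.val : ℝ) * Real.pi / (n : ℝ)) +
        b * Real.sin (2 * (j.val : ℝ) * Real.pi / (n : ℝ)) ≤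
      a * Real.cos (2 * (m : ℝ) * Real.pi / (n : ℝ)) +
        b * Real.sin (2 * (m : ℝ) * Real.pi / (n : ℝ)) := by
    intro m hm
    have h1 := hle ⟨m, hm⟩
    rw [expand ⟨m, hm⟩] at h1
    simp only [Fin.val_mk] at h1
    nlinarith
  have hab : ¬ (a = 0 ∧ b = 0) := by
    rintro ⟨ha0, hb0⟩
    rw [ha0, hb0] at hEj
    nlinarith
  rcases Nat.lt_or_ge k.val j.val with hkj | hge
  · rcases trig_aux n j.val k.val hn hkj j.isLt a b hab hmin heqf with h1 | h1
    · left
      have h2 : j.val = k.val + 1 := by omega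
      rw [h2]; push_cast; ring
    · right
      have hvj : j.val ≠ k.val := fun h => hjk (Fin.ext h)
      have h2 : j.val + 1 = k.val + n := by
        have := j.isLt; have := k.isLt; omega
      have h3 : ((j.val + 1 : ℕ) : ZMod n) = ((k.val + n : ℕ) : ZMod n) := by rw [h2]
      push_cast at h3
      rw [ZMod.natCast_self] at h3
      linear_combination h3
  · have hjk' : j.val < k.val := lt_of_le_of_ne hge (fun h => hjk (Fin.ext h))
    have hmin' : ∀ m : ℕ, m < n →
        a * Real.cos (2 * (k.val : ℝ) * Real.pi / (n : ℝ)) +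
          b * Real.sin (2 * (k.val : ℝ) * Real.pi / (n : ℝ)) ≤
        a * Real.cos (2 * (m : ℝ) * Real.pi / (n : ℝ)) +
          b * Real.sin (2 * (m : ℝ) * Real.pi / (n : ℝ)) := by
      intro m hm
      rw [← heqf]
      exact hmin m hm
    rcases trig_aux n k.val j.val hn hjk' k.isLt a b hab hmin' heqf.symm with h1 | h1
    · right
      have h2 : k.val = j.val + 1 := by omega
      rw [h2]; push_cast; ring
    · left
      have h2 : k.val + 1 = j.val + n := by
        have := j.isLt; have := k.isLt; omega
      have h3 : ((k.val + 1 : ℕ) : ZMod n) = ((j.val + n : ℕ) : ZMod n) := by rw [h2]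
      push_cast at h3
      rw [ZMod.natCast_self] at h3
      linear_combination -h3
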